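/- Let f(z) = Σ a_n z^n be analytic on 𝔻 with |f| ≤ 1, let p ∈ (0,1] and m a positive integer. If r ∈ [0,1) satisfies 2 r^2 (1 + r^m) ≤ p (1 - r^2)(1 - r^m), then for all |z| = r: |f(z^m)|^p + Σ_{n≥1} |a_{2n}| r^{2n} ≤ 1. -/

import Mathlib

open Metric Complex Finset

noncomputable def Complex.abs : AbsoluteValue ℂ ℝ where
  toFun z := ‖z‖
  map_mul' := norm_mul
  nonneg' := norm_nonneg
  eq_zero' _ := norm_eq_zero
  add_le' := norm_add_le

lemma Complex.norm_eq_abs (z : ℂ) : ‖z‖ = Complex.abs z := rfl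

lemma Complex.abs_conj (z : ℂ) : Complex.abs ((starRingEnd ℂ) z) = Complex.abs z :=
  Complex.norm_conj z

lemma Complex.abs_natCast (n : ℕ) : Complex.abs (n : ℂ) = n := Complex.norm_natCast n

lemma Complex.abs_ofReal (x : ℝ) : Complex.abs (x : ℂ) = |x| := Complex.norm_real x

lemma Complex.re_le_abs (z : ℂ) : z.re ≤ Complex.abs z := Complex.re_le_norm z

lemma Complex.sq_abs (z : ℂ) : Complex.abs z ^ 2 = Complex.normSq z := Complex.sq_norm z

lemma Complex.abs_apply (z : ℂ) : Complex.abs z = Real.sqrt (Complex.normSq z) :=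
  Complex.norm_def z

lemma fps_of_hasSum (c : ℕ → ℂ) (g : ℂ → ℂ)
    (hg : ∀ z ∈ ball (0:ℂ) 1, HasSum (fun k => c k * z ^ k) (g z)) :
    HasFPowerSeriesOnBall g (FormalMultilinearSeries.ofScalars ℂ c) 0 1 := by
  constructor
  · -- 1 ≤ radius
    apply ENNReal.le_of_forall_nnreal_lt
    intro s hs
    have hs1 : (s : ℝ) < 1 := by exact_mod_cast hs
    set ρ : ℝ := ((s : ℝ) + 1) / 2 with hρdef
    have hsρ : (s : ℝ) < ρ := by simp only [hρdef]; linarith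
    have hρ1 : ρ < 1 := by simp only [hρdef]; linarith
    have hρ0 : 0 ≤ ρ := by positivity
    have hmem : (ρ : ℂ) ∈ ball (0:ℂ) 1 := by
      simp only [mem_ball_zero_iff, Complex.norm_real, Real.norm_of_nonneg hρ0]; exact hρ1
    have hsum := (hg _ hmem).summable
    have htend : Filter.Tendsto (fun k => ‖c k‖ * ρ ^ k) Filter.atTop (nhds 0) := by
      have := hsum.tendsto_atTop_zero
      have h2 := this.norm
      simp only [norm_zero] at h2
      convert h2 using 2 with k
      rw [norm_mul, norm_pow, Complex.norm_real, Real.norm_of_nonneg hρ0]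
    obtain ⟨C, hC⟩ := htend.bddAbove_range
    apply (FormalMultilinearSeries.ofScalars ℂ c).le_radius_of_bound C
    intro n
    rw [FormalMultilinearSeries.ofScalars_norm]
    calc ‖c n‖ * (s:ℝ) ^ n ≤ ‖c n‖ * ρ ^ n := by
          apply mul_le_mul_of_nonneg_left (pow_le_pow_left₀ s.2 hsρ.le n) (norm_nonneg _)
      _ ≤ C := hC ⟨n, rfl⟩
  · exact one_pos
  · intro y hy
    have hy' : y ∈ ball (0:ℂ) 1 := by
      rw [mem_emetric_ball_zero_iff, enorm_eq_nnnorm] at hy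
      simp only [mem_ball_zero_iff]
      exact_mod_cast hy
    have := hg y hy'
    rw [zero_add]
    convert this using 1
    · rfl
    funext k
    rw [FormalMultilinearSeries.ofScalars_apply_eq, smul_eq_mul]

lemma avg_lemma (f : ℂ → ℂ) (a : ℕ → ℂ)
    (hb : ∀ z ∈ ball (0:ℂ) 1, Complex.abs (f z) ≤ 1)
    (hsum : ∀ z ∈ ball (0:ℂ) 1, HasSum (fun k : ℕ => a k * z ^ k) (f z))
    (n : ℕ) (hn : 0 < n) (w : ℂ) (hw : w ∈ ball (0:ℂ) 1) :
    ∃ S : ℂ, HasSum (fun k : ℕ => a (n * k) * w ^ k) S ∧ Complex.abs S ≤ 1 ∧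
      (Set.EqOn f (fun _ => f 0) (ball (0:ℂ) 1) → S = f 0) := by
  obtain ⟨ζ, hζw⟩ := IsAlgClosed.exists_pow_nat_eq w hn
  have hζ : Complex.abs ζ < 1 := by
    by_contra h
    push_neg at h
    have h1 : (1:ℝ) ≤ Complex.abs ζ ^ n := one_le_pow₀ h
    rw [← map_pow, hζw] at h1
    rw [mem_ball_zero_iff] at hw
    simp only [Complex.norm_eq_abs] at hw
    linarith
  set ω : ℂ := Complex.exp (2 * Real.pi * Complex.I / n) with hωdef
  have hω : IsPrimitiveRoot ω n := Complex.isPrimitiveRoot_exp n hn.ne'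
  have habsω : Complex.abs ω = 1 := by
    have h1 : Complex.abs ω ^ n = 1 := by
      rw [← map_pow, hω.pow_eq_one, map_one]
    rcases (pow_eq_one_iff_cases).1 h1 with h | h | h
    · omega
    · exact h
    · exfalso; nlinarith [Complex.abs.nonneg ω]
  have hmemj : ∀ j : ℕ, ω ^ j * ζ ∈ ball (0:ℂ) 1 := by
    intro j
    rw [mem_ball_zero_iff]
    simp only [Complex.norm_eq_abs, map_mul, map_pow, habsω, one_pow, one_mul]
    exact hζ
  have H1 : HasSum (fun k : ℕ => ∑ j ∈ range n, a k * (ω ^ j * ζ) ^ k)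
      (∑ j ∈ range n, f (ω ^ j * ζ)) :=
    hasSum_sum fun j _ => hsum _ (hmemj j)
  set S0 : ℂ := ∑ j ∈ range n, f (ω ^ j * ζ) with hS0
  have inner : ∀ k : ℕ, (∑ j ∈ range n, a k * (ω ^ j * ζ) ^ k)
      = if n ∣ k then (n : ℂ) * (a k * ζ ^ k) else 0 := by
    intro k
    have h1 : ∀ j, a k * (ω ^ j * ζ) ^ k = (ω ^ k) ^ j * (a k * ζ ^ k) := by
      intro j
      rw [mul_pow, ← pow_mul, ← pow_mul, mul_comm j k]
      ring
    simp only [h1, ← Finset.sum_mul]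
    by_cases hdvd : n ∣ k
    · have : ω ^ k = 1 := (hω.pow_eq_one_iff_dvd k).2 hdvd
      simp [this, hdvd]
    · have hne : ω ^ k ≠ 1 := fun h => hdvd ((hω.pow_eq_one_iff_dvd k).1 h)
      rw [geom_sum_eq hne]
      have : (ω ^ k) ^ n = 1 := by
        rw [← pow_mul, mul_comm, pow_mul, hω.pow_eq_one, one_pow]
      simp [this, hdvd]
  rw [funext inner] at H1
  have hinj : Function.Injective (fun k : ℕ => n * k) := fun x y h => by
    exact Nat.eq_of_mul_eq_mul_left hn h
  have hvan : ∀ k ∉ Set.range (fun k : ℕ => n * k),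
      (if n ∣ k then (n : ℂ) * (a k * ζ ^ k) else 0) = 0 := by
    intro k hk
    rw [if_neg]
    intro ⟨c, hc⟩
    exact hk ⟨c, hc.symm⟩
  have H2 : HasSum ((fun k => if n ∣ k then (n : ℂ) * (a k * ζ ^ k) else 0)
      ∘ (fun k : ℕ => n * k)) S0 := (hinj.hasSum_iff hvan).2 H1
  have H3 : HasSum (fun k : ℕ => (n : ℂ) * (a (n * k) * w ^ k)) S0 := by
    convert H2 using 2 with k
    simp only [Function.comp_apply, if_pos (dvd_mul_right n k)]
    rw [pow_mul, hζw]
  have hn0 : (n : ℂ) ≠ 0 := Nat.cast_ne_zero.2 hn.ne'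
  have H4 : HasSum (fun k : ℕ => a (n * k) * w ^ k) ((n : ℂ)⁻¹ * S0) := by
    have := H3.mul_left ((n : ℂ)⁻¹)
    simpa [inv_mul_cancel_left₀ hn0] using this
  refine ⟨(n : ℂ)⁻¹ * S0, H4, ?_, ?_⟩
  · have hS0le : Complex.abs S0 ≤ n := by
      calc Complex.abs S0 ≤ ∑ j ∈ range n, Complex.abs (f (ω ^ j * ζ)) := by
            simpa [Complex.norm_eq_abs] using norm_sum_le (range n) (fun j => f (ω ^ j * ζ))
        _ ≤ ∑ j ∈ range n, 1 := Finset.sum_le_sum fun j _ => hb _ (hmemj j)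
        _ = n := by simp
    rw [map_mul, map_inv₀]
    rw [Complex.abs_natCast]
    rw [inv_mul_le_iff₀ (by exact_mod_cast hn), mul_one]
    exact hS0le
  · intro hEq
    have : S0 = n * f 0 := by
      rw [hS0]
      rw [Finset.sum_congr rfl fun j _ => hEq (hmemj j)]
      simp [mul_comm]
    rw [this, inv_mul_cancel_left₀ hn0]

lemma den_ne_zero {x : ℂ} (h : Complex.abs x < 1) : (1 : ℂ) - x ≠ 0 := by
  intro h'
  rw [sub_eq_zero] at h'
  rw [← h'] at h
  simp at h

lemma moebius_le {α u : ℂ} (hα : Complex.abs α ≤ 1) (hu : Complex.abs u ≤ 1) :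
    Complex.abs (u - α) ≤ Complex.abs (1 - (starRingEnd ℂ) α * u) := by
  have hnα : Complex.normSq α ≤ 1 := by rw [← Complex.sq_abs]; nlinarith [Complex.abs.nonneg α]
  have hnu : Complex.normSq u ≤ 1 := by rw [← Complex.sq_abs]; nlinarith [Complex.abs.nonneg u]
  rw [Complex.abs_apply, Complex.abs_apply]
  apply Real.sqrt_le_sqrt
  have key : Complex.normSq (1 - (starRingEnd ℂ) α * u) - Complex.normSq (u - α)
      = (1 - Complex.normSq α) * (1 - Complex.normSq u) := by
    simp only [Complex.normSq_apply, Complex.sub_re, Complex.sub_im, Complex.one_re,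
      Complex.one_im, Complex.mul_re, Complex.mul_im, Complex.conj_re, Complex.conj_im]
    ring
  nlinarith [key]

lemma schwarz_le (F : ℂ → ℂ) (hd : DifferentiableOn ℂ F (ball (0:ℂ) 1)) (h0 : F 0 = 0)
    (hle : ∀ z ∈ ball (0:ℂ) 1, Complex.abs (F z) ≤ 1) :
    (∀ z ∈ ball (0:ℂ) 1, Complex.abs (F z) ≤ Complex.abs z) ∧
      Complex.abs (deriv F 0) ≤ 1 := by
  have hmaps : ∀ R : ℝ, 1 < R → Set.MapsTo F (ball (0:ℂ) 1) (ball (F 0) R) := by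
    intro R hR z hz
    rw [h0, mem_ball_zero_iff]
    calc ‖F z‖ ≤ 1 := hle z hz
      _ < R := hR
  constructor
  · intro z hz
    rcases eq_or_ne z 0 with rfl | hz0
    · simp [h0]
    · have habs : 0 < Complex.abs z := by simpa using hz0
      apply le_of_forall_gt_imp_ge_of_dense
      intro c hc
      have hR : 1 < c / Complex.abs z := (one_lt_div habs).2 hc
      have h1 := Complex.dist_le_div_mul_dist_of_mapsTo_ball hd ((hmaps _ hR).mono_right ball_subset_closedBall) hz
      rw [h0, dist_zero_right, dist_zero_right, div_one] at h1
      simp only [Complex.norm_eq_abs] at h1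
      calc Complex.abs (F z) ≤ c / Complex.abs z * Complex.abs z := h1
        _ = c := div_mul_cancel₀ c habs.ne'
  · apply le_of_forall_gt_imp_ge_of_dense
    intro R hR
    have h1 := Complex.norm_deriv_le_div_of_mapsTo_ball hd ((hmaps R hR).mono_right ball_subset_closedBall) one_pos
    rwa [div_one] at h1

lemma wiener (f : ℂ → ℂ) (a : ℕ → ℂ)
    (hf : DifferentiableOn ℂ f (ball (0:ℂ) 1))
    (hb : ∀ z ∈ ball (0:ℂ) 1, Complex.abs (f z) ≤ 1)
    (hsum : ∀ z ∈ ball (0:ℂ) 1, HasSum (fun k : ℕ => a k * z ^ k) (f z))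
    (n : ℕ) (hn : 0 < n) :
    Complex.abs (a n) ≤ 1 - Complex.abs (a 0) ^ 2 := by
  have h0mem : (0:ℂ) ∈ ball (0:ℂ) 1 := by simp
  have ha0 : a 0 = f 0 := by
    have h1 := hsum 0 h0mem
    have h2 : HasSum (fun k : ℕ => a k * (0:ℂ) ^ k) (a 0 * (0:ℂ) ^ 0) :=
      hasSum_single 0 (fun b hb => by simp [zero_pow hb])
    have := h2.unique h1
    simpa using this
  set b : ℕ → ℂ := fun k => a (n * k) with hbdef
  set G : ℂ → ℂ := fun w => ∑' k : ℕ, b k * w ^ k with hGdef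
  have hGsum : ∀ w ∈ ball (0:ℂ) 1, HasSum (fun k : ℕ => b k * w ^ k) (G w) := by
    intro w hw
    obtain ⟨S, hS1, -, -⟩ := avg_lemma f a hb hsum n hn w hw
    have hb' : HasSum (fun k : ℕ => b k * w ^ k) S := hS1
    simpa only [hGdef, hb'.tsum_eq] using hb'
  have hGle : ∀ w ∈ ball (0:ℂ) 1, Complex.abs (G w) ≤ 1 := by
    intro w hw
    obtain ⟨S, hS1, hS2, -⟩ := avg_lemma f a hb hsum n hn w hw
    have hb' : HasSum (fun k : ℕ => b k * w ^ k) S := hS1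
    simpa only [hGdef, hb'.tsum_eq] using hS2
  have hGconst : Set.EqOn f (fun _ => f 0) (ball (0:ℂ) 1) →
      ∀ w ∈ ball (0:ℂ) 1, G w = f 0 := by
    intro hEq w hw
    obtain ⟨S, hS1, -, hS3⟩ := avg_lemma f a hb hsum n hn w hw
    have hb' : HasSum (fun k : ℕ => b k * w ^ k) S := hS1
    simp only [hGdef, hb'.tsum_eq]
    exact hS3 hEq
  have hfps := fps_of_hasSum b G hGsum
  have hderiv : deriv G 0 = a n := by
    rw [hfps.hasFPowerSeriesAt.deriv]
    rw [FormalMultilinearSeries.ofScalars_apply_eq]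
    simp [hbdef]
  have hG0 : G 0 = a 0 := by
    have h1 := hGsum 0 h0mem
    have h2 : HasSum (fun k : ℕ => b k * (0:ℂ) ^ k) (b 0 * (0:ℂ) ^ 0) :=
      hasSum_single 0 (fun c hc => by simp [zero_pow hc])
    have := h2.unique h1
    simp only [pow_zero, mul_one] at this
    rw [← this, hbdef]
    simp
  have hGd : DifferentiableOn ℂ G (ball (0:ℂ) 1) := by
    have := hfps.differentiableOn
    rwa [← ENNReal.ofReal_one, Metric.emetric_ball] at this
  have habs0 : Complex.abs (a 0) ≤ 1 := by rw [ha0]; exact hb 0 h0mem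
  rcases lt_or_eq_of_le habs0 with hlt | heq
  · -- |a 0| < 1
    set α : ℂ := a 0 with hαdef
    set F : ℂ → ℂ := fun z => (G z - α) / (1 - (starRingEnd ℂ) α * G z) with hFdef
    have hden : ∀ z ∈ ball (0:ℂ) 1, (1:ℂ) - (starRingEnd ℂ) α * G z ≠ 0 := by
      intro z hz
      apply den_ne_zero
      rw [map_mul, Complex.abs_conj]
      calc Complex.abs α * Complex.abs (G z) ≤ Complex.abs α * 1 :=
            mul_le_mul_of_nonneg_left (hGle z hz) (Complex.abs.nonneg α)
        _ < 1 := by rw [mul_one]; exact hlt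
    have hFd : DifferentiableOn ℂ F (ball (0:ℂ) 1) := by
      apply DifferentiableOn.div (hGd.sub_const α)
      · exact (differentiableOn_const 1).sub (hGd.const_mul _)
      · exact hden
    have hF0 : F 0 = 0 := by
      rw [hFdef]
      simp only [hG0, ← hαdef, sub_self, zero_div]
    have hFle : ∀ z ∈ ball (0:ℂ) 1, Complex.abs (F z) ≤ 1 := by
      intro z hz
      rw [hFdef]
      simp only [map_div₀]
      rw [div_le_one (Complex.abs.pos (hden z hz))]
      exact moebius_le hlt.le (hGle z hz)
    obtain ⟨-, hF1⟩ := schwarz_le F hFd hF0 hFle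
    -- compute deriv F 0
    have hGat : HasDerivAt G (a n) 0 := by
      have := (hGd.differentiableAt (isOpen_ball.mem_nhds h0mem)).hasDerivAt
      rwa [hderiv] at this
    have hu : HasDerivAt (fun z => G z - α) (a n) 0 := hGat.sub_const α
    have hv : HasDerivAt (fun z => (1:ℂ) - (starRingEnd ℂ) α * G z)
        (-((starRingEnd ℂ) α * a n)) 0 := (hGat.const_mul ((starRingEnd ℂ) α)).const_sub 1
    have hFat : HasDerivAt F
        ((a n * ((1:ℂ) - (starRingEnd ℂ) α * G 0) - (G 0 - α) * (-((starRingEnd ℂ) α * a n)))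
          / ((1:ℂ) - (starRingEnd ℂ) α * G 0) ^ 2) 0 := hu.div hv (hden 0 h0mem)
    have hD : (1:ℂ) - (starRingEnd ℂ) α * α ≠ 0 := by
      have := hden 0 h0mem; rwa [hG0] at this
    have hdF : deriv F 0 = a n / ((1:ℂ) - (starRingEnd ℂ) α * α) := by
      rw [hFat.deriv, hG0]
      rw [sub_self, zero_mul, sub_zero, sq]
      rw [mul_div_mul_right _ _ hD]
    have hcm : (1:ℂ) - (starRingEnd ℂ) α * α = ((1 - Complex.normSq α : ℝ) : ℂ) := by
      have h2 : (starRingEnd ℂ) α * α = ((Complex.normSq α : ℝ) : ℂ) := by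
        rw [mul_comm, Complex.mul_conj]
      rw [h2]
      push_cast
      ring
    have hN : Complex.normSq α < 1 := by
      rw [← Complex.sq_abs]
      nlinarith [Complex.abs.nonneg α]
    have habsden : Complex.abs ((1:ℂ) - (starRingEnd ℂ) α * α) = 1 - Complex.normSq α := by
      rw [hcm, Complex.abs_ofReal, _root_.abs_of_nonneg (by linarith)]
    rw [hdF, map_div₀, habsden, div_le_one (by linarith)] at hF1
    rw [← Complex.sq_abs] at hF1
    exact hF1
  · -- |a 0| = 1 : f is constant
    have hmax : IsMaxOn (norm ∘ f) (ball (0:ℂ) 1) 0 := by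
      intro z hz
      have h1 : Complex.abs (f 0) = 1 := by rw [← ha0]; exact heq
      simp only [Set.mem_setOf_eq, Function.comp_apply, Complex.norm_eq_abs, h1]
      exact hb z hz
    have hconst := eqOn_of_isPreconnected_of_isMaxOn_norm
      (convex_ball (0:ℂ) 1).isPreconnected isOpen_ball hf h0mem hmax
    have hGc : ∀ w ∈ ball (0:ℂ) 1, G w = f 0 := hGconst hconst
    have hdG : deriv G 0 = 0 := by
      have hev : G =ᶠ[nhds (0:ℂ)] fun _ => f 0 :=
        Filter.eventuallyEq_of_mem (isOpen_ball.mem_nhds h0mem) hGc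
      rw [hev.deriv_eq]
      exact deriv_const 0 (f 0)
    rw [hdG] at hderiv
    rw [← hderiv, heq]
    simp

lemma pick_core {α u : ℂ} (ha : Complex.abs α ≤ 1) (hu : Complex.abs u ≤ 1) :
    Complex.abs (α + u) * (1 + Complex.abs α * Complex.abs u)
      ≤ (Complex.abs α + Complex.abs u) * Complex.abs (1 + (starRingEnd ℂ) α * u) := by
  set a : ℝ := Complex.abs α with hadef
  set σ : ℝ := Complex.abs u with hσdef
  set t : ℝ := ((starRingEnd ℂ) α * u).re with htdef
  set A : ℝ := Complex.abs (α + u) with hAdef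
  set B : ℝ := Complex.abs (1 + (starRingEnd ℂ) α * u) with hBdef
  have ha0 : 0 ≤ a := Complex.abs.nonneg α
  have hσ0 : 0 ≤ σ := Complex.abs.nonneg u
  have hA0 : 0 ≤ A := Complex.abs.nonneg _
  have hB0 : 0 ≤ B := Complex.abs.nonneg _
  have hA2 : A ^ 2 = a ^ 2 + σ ^ 2 + 2 * t := by
    rw [hAdef, Complex.sq_abs, Complex.normSq_add, ← Complex.sq_abs, ← Complex.sq_abs]
    congr 1
    have h1 : α * (starRingEnd ℂ) u = (starRingEnd ℂ) ((starRingEnd ℂ) α * u) := by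
      rw [map_mul, Complex.conj_conj]
    rw [h1, Complex.conj_re]
  have hB2 : B ^ 2 = 1 + a ^ 2 * σ ^ 2 + 2 * t := by
    rw [hBdef, Complex.sq_abs, Complex.normSq_add]
    rw [Complex.normSq_one, Complex.normSq_mul, Complex.normSq_conj, one_mul]
    rw [← Complex.sq_abs, ← Complex.sq_abs, Complex.conj_re]
  have ht : t ≤ a * σ := by
    calc t ≤ Complex.abs ((starRingEnd ℂ) α * u) := Complex.re_le_abs _
      _ = a * σ := by rw [map_mul, Complex.abs_conj]
  have hsq : (A * (1 + a * σ)) ^ 2 ≤ ((a + σ) * B) ^ 2 := by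
    have h3 : 0 ≤ (a * σ - t) * ((1 - a ^ 2) * (1 - σ ^ 2)) := by
      apply mul_nonneg (by linarith)
      apply mul_nonneg <;> nlinarith
    rw [mul_pow, mul_pow, hA2, hB2]
    nlinarith [h3]
  calc A * (1 + a * σ) = Real.sqrt ((A * (1 + a * σ)) ^ 2) :=
        (Real.sqrt_sq (by positivity)).symm
    _ ≤ Real.sqrt (((a + σ) * B) ^ 2) := Real.sqrt_le_sqrt hsq
    _ = (a + σ) * B := Real.sqrt_sq (by positivity)

lemma pick (f : ℂ → ℂ)
    (hf : DifferentiableOn ℂ f (ball (0:ℂ) 1))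
    (hb : ∀ z ∈ ball (0:ℂ) 1, Complex.abs (f z) ≤ 1) :
    ∀ w ∈ ball (0:ℂ) 1, Complex.abs (f w) ≤
      (Complex.abs (f 0) + Complex.abs w) / (1 + Complex.abs (f 0) * Complex.abs w) := by
  intro w hw
  have h0mem : (0:ℂ) ∈ ball (0:ℂ) 1 := by simp
  set α : ℂ := f 0 with hαdef
  set a : ℝ := Complex.abs α with hadef
  set s : ℝ := Complex.abs w with hsdef
  have ha1 : a ≤ 1 := hb 0 h0mem
  have hs0 : 0 ≤ s := Complex.abs.nonneg w
  have ha0 : 0 ≤ a := Complex.abs.nonneg α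
  have hs1 : s < 1 := by rw [hsdef, ← Complex.norm_eq_abs, ← mem_ball_zero_iff]; exact hw
  have hdenpos : 0 < 1 + a * s := by nlinarith
  rcases lt_or_eq_of_le ha1 with hlt | heq
  · -- a < 1
    set F : ℂ → ℂ := fun z => (f z - α) / (1 - (starRingEnd ℂ) α * f z) with hFdef
    have hden : ∀ z ∈ ball (0:ℂ) 1, (1:ℂ) - (starRingEnd ℂ) α * f z ≠ 0 := by
      intro z hz
      apply den_ne_zero
      rw [map_mul, Complex.abs_conj]
      calc Complex.abs α * Complex.abs (f z) ≤ a * 1 :=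
            mul_le_mul_of_nonneg_left (hb z hz) ha0
        _ < 1 := by rw [mul_one]; exact hlt
    have hFd : DifferentiableOn ℂ F (ball (0:ℂ) 1) := by
      apply DifferentiableOn.div (hf.sub_const α)
      · exact (differentiableOn_const 1).sub (hf.const_mul _)
      · exact hden
    have hF0 : F 0 = 0 := by rw [hFdef]; simp only [← hαdef, sub_self, zero_div]
    have hFle : ∀ z ∈ ball (0:ℂ) 1, Complex.abs (F z) ≤ 1 := by
      intro z hz
      rw [hFdef]
      simp only [map_div₀]
      rw [div_le_one (Complex.abs.pos (hden z hz))]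
      exact moebius_le hlt.le (hb z hz)
    obtain ⟨hFz, -⟩ := schwarz_le F hFd hF0 hFle
    set u : ℂ := F w with hudef
    have hus : Complex.abs u ≤ s := hFz w hw
    set σ : ℝ := Complex.abs u with hσdef
    have hσ1 : σ < 1 := lt_of_le_of_lt hus hs1
    have hσ0 : 0 ≤ σ := Complex.abs.nonneg u
    have hd1 : (1:ℂ) - (starRingEnd ℂ) α * f w ≠ 0 := hden w hw
    have hd2 : (1:ℂ) + (starRingEnd ℂ) α * u ≠ 0 := by
      have h1 : Complex.abs (-((starRingEnd ℂ) α * u)) < 1 := by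
        rw [map_neg_eq_map, map_mul, Complex.abs_conj]
        calc Complex.abs α * Complex.abs u ≤ 1 * σ :=
              mul_le_mul hlt.le le_rfl hσ0 zero_le_one
          _ < 1 := by rw [one_mul]; exact hσ1
      have := den_ne_zero h1
      rwa [sub_neg_eq_add] at this
    have hkey : f w = (α + u) / (1 + (starRingEnd ℂ) α * u) := by
      rw [eq_div_iff hd2, hudef, hFdef]
      have hd1' : (1:ℂ) - f w * (starRingEnd ℂ) α ≠ 0 := by rwa [mul_comm]
      field_simp
      ring
    have hBpos : 0 < Complex.abs ((1:ℂ) + (starRingEnd ℂ) α * u) := Complex.abs.pos hd2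
    have hstep1 : Complex.abs (f w) ≤ (a + σ) / (1 + a * σ) := by
      rw [hkey, map_div₀, div_le_div_iff₀ hBpos (by nlinarith)]
      exact pick_core hlt.le hσ1.le
    have hstep2 : (a + σ) / (1 + a * σ) ≤ (a + s) / (1 + a * s) := by
      rw [div_le_div_iff₀ (by nlinarith) hdenpos]
      have h2 : (0:ℝ) ≤ (s - σ) * (1 - a ^ 2) := mul_nonneg (by linarith) (by nlinarith)
      nlinarith [h2]
    exact hstep1.trans hstep2
  · -- a = 1 : f constant
    have hmax : IsMaxOn (norm ∘ f) (ball (0:ℂ) 1) 0 := by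
      intro z hz
      show ‖f z‖ ≤ ‖f 0‖
      simp only [Complex.norm_eq_abs]
      calc Complex.abs (f z) ≤ 1 := hb z hz
        _ = Complex.abs (f 0) := heq.symm
    have hconst := eqOn_of_isPreconnected_of_isMaxOn_norm
      (convex_ball (0:ℂ) 1).isPreconnected isOpen_ball hf h0mem hmax
    have hfw : f w = α := hconst hw
    rw [hfw, ← hadef, heq, one_mul, le_div_iff₀ (by linarith : (0:ℝ) < 1 + s)]
    linarith

lemma key_ineq {A ρ r p : ℝ} (hA0 : 0 ≤ A) (hA1 : A ≤ 1) (hρ0 : 0 ≤ ρ) (hρ1 : ρ < 1)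
    (hr0 : 0 ≤ r) (hr1 : r < 1) (hp0 : 0 < p) (hp1 : p ≤ 1)
    (hcond : 2 * r ^ 2 * (1 + ρ) ≤ p * (1 - r ^ 2) * (1 - ρ)) :
    (1 - A ^ 2) * r ^ 2 / (1 - r ^ 2) ≤ p * (1 - A) * (1 - ρ) / (1 + A * ρ) := by
  rw [div_le_div_iff₀ (by nlinarith) (by nlinarith)]
  have h1 : (1 - A) * (2 * r ^ 2 * (1 + ρ)) ≤ (1 - A) * (p * (1 - r ^ 2) * (1 - ρ)) :=
    mul_le_mul_of_nonneg_left hcond (by linarith)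
  have h2 : (1 - A ^ 2) * r ^ 2 * (1 + A * ρ) ≤ (1 - A) * (2 * r ^ 2 * (1 + ρ)) := by
    nlinarith [mul_nonneg (mul_nonneg (sub_nonneg.2 hA1) (sq_nonneg r))
      (mul_nonneg (sub_nonneg.2 hA1) (by nlinarith : (0:ℝ) ≤ 1 + ρ * (2 + A)))]
  linarith

theorem bohr_rogosinski_even_coeffs
    (f : ℂ → ℂ) (a : ℕ → ℂ) (p : ℝ) (m : ℕ) (r : ℝ)
    (hf : DifferentiableOn ℂ f (ball (0:ℂ) 1))
    (hb : ∀ z ∈ ball (0:ℂ) 1, ‖f z‖ ≤ 1)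
    (hsum : ∀ z ∈ ball (0:ℂ) 1, HasSum (fun n : ℕ => a n * z ^ n) (f z))
    (hp : p ∈ Set.Ioc (0:ℝ) 1) (hm : 0 < m)
    (hr : r ∈ Set.Ico (0:ℝ) 1)
    (hcond : 2 * r ^ 2 * (1 + r ^ m) ≤ p * (1 - r ^ 2) * (1 - r ^ m)) :
    ∀ z : ℂ, ‖z‖ = r →
      ‖f (z ^ m)‖ ^ p
        + ∑' n : ℕ, ‖a (2 * (n + 1))‖ * r ^ (2 * (n + 1)) ≤ 1 := by
  intro z hz
  simp only [Complex.norm_eq_abs] at hz ⊢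
  obtain ⟨hr0, hr1⟩ := hr
  obtain ⟨hp0, hp1⟩ := hp
  have h0mem : (0:ℂ) ∈ ball (0:ℂ) 1 := by simp
  set A : ℝ := Complex.abs (f 0) with hAdef
  set ρ : ℝ := r ^ m with hρdef
  have hρ0 : 0 ≤ ρ := pow_nonneg hr0 m
  have hρ1 : ρ < 1 := pow_lt_one₀ hr0 hr1 hm.ne'
  have hA0 : 0 ≤ A := Complex.abs.nonneg _
  have hA1 : A ≤ 1 := hb 0 h0mem
  have hr2 : r ^ 2 < 1 := pow_lt_one₀ hr0 hr1 (by norm_num)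
  have habsw : Complex.abs (z ^ m) = ρ := by rw [map_pow, hz]
  have hwmem : z ^ m ∈ ball (0:ℂ) 1 := by
    rw [mem_ball_zero_iff, Complex.norm_eq_abs, habsw]; exact hρ1
  -- a 0 = f 0
  have ha0 : a 0 = f 0 := by
    have h1 := hsum 0 h0mem
    have h2 : HasSum (fun k : ℕ => a k * (0:ℂ) ^ k) (a 0 * (0:ℂ) ^ 0) :=
      hasSum_single 0 (fun b hb => by simp [zero_pow hb])
    have := h2.unique h1
    simpa using this
  have hdenpos : (0:ℝ) < 1 + A * ρ := by nlinarith
  -- first term bound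
  set t : ℝ := Complex.abs (f (z ^ m)) with htdef
  have ht0 : 0 ≤ t := Complex.abs.nonneg _
  have htle : t ≤ (A + ρ) / (1 + A * ρ) := by
    have := pick f hf hb (z ^ m) hwmem
    rwa [habsw] at this
  have hrpow : t ^ p ≤ 1 - p * (1 - A) * (1 - ρ) / (1 + A * ρ) := by
    have h1 : t ^ p ≤ 1 + p * (t - 1) := by
      have h2 := rpow_one_add_le_one_add_mul_self (by linarith : (-1:ℝ) ≤ t - 1) hp0.le hp1
      have e : (1:ℝ) + (t - 1) = t := by ring
      rwa [e] at h2
    have h3 : 1 + p * (t - 1) ≤ 1 + p * ((A + ρ) / (1 + A * ρ) - 1) := by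
      have := mul_le_mul_of_nonneg_left (sub_le_sub_right htle 1) hp0.le
      linarith
    have h4 : 1 + p * ((A + ρ) / (1 + A * ρ) - 1) = 1 - p * (1 - A) * (1 - ρ) / (1 + A * ρ) := by
      field_simp
      ring
    linarith
  -- sum bound
  have hW : ∀ n : ℕ, Complex.abs (a (2 * (n + 1))) ≤ 1 - A ^ 2 := by
    intro n
    have := wiener f a hf hb hsum (2 * (n + 1)) (by positivity)
    rwa [ha0] at this
  have hterm : ∀ n : ℕ, Complex.abs (a (2 * (n + 1))) * r ^ (2 * (n + 1))
      ≤ (1 - A ^ 2) * r ^ 2 * (r ^ 2) ^ n := by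
    intro n
    have h1 : r ^ (2 * (n + 1)) = r ^ 2 * (r ^ 2) ^ n := by
      rw [← pow_mul]; ring
    rw [h1, ← mul_assoc]
    apply mul_le_mul_of_nonneg_right _ (pow_nonneg (by positivity) n)
    exact mul_le_mul_of_nonneg_right (hW n) (by positivity)
  have hmaj : Summable (fun n : ℕ => (1 - A ^ 2) * r ^ 2 * (r ^ 2) ^ n) :=
    (summable_geometric_of_lt_one (by positivity) hr2).mul_left _
  have hsummin : Summable (fun n : ℕ => Complex.abs (a (2 * (n + 1))) * r ^ (2 * (n + 1))) :=
    Summable.of_nonneg_of_le (fun n => by positivity) hterm hmaj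
  have hsumle : (∑' n : ℕ, Complex.abs (a (2 * (n + 1))) * r ^ (2 * (n + 1)))
      ≤ (1 - A ^ 2) * r ^ 2 / (1 - r ^ 2) := by
    calc (∑' n : ℕ, Complex.abs (a (2 * (n + 1))) * r ^ (2 * (n + 1)))
        ≤ ∑' n : ℕ, (1 - A ^ 2) * r ^ 2 * (r ^ 2) ^ n := Summable.tsum_le_tsum hterm hsummin hmaj
      _ = (1 - A ^ 2) * r ^ 2 * (1 - r ^ 2)⁻¹ := by
          rw [tsum_mul_left, tsum_geometric_of_lt_one (by positivity) hr2]
      _ = (1 - A ^ 2) * r ^ 2 / (1 - r ^ 2) := by rw [div_eq_mul_inv]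
  have hki := key_ineq hA0 hA1 hρ0 hρ1 hr0 hr1 hp0 hp1 hcond
  linarith
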